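/- For every server layout S on the line, every capacity function c : S → ℕ with c(s) ≥ 1, and every deterministic online algorithm A for OFAL(S,c), there exists a surrounding-oriented deterministic online algorithm A′ for OFAL(S,c) such that A′(σ|S) ≤ A(σ|S) for every request sequence σ. -/

import Mathlib

noncomputable section

namespace OFAL

/-! ### Basic model: servers are points of the real line, given as a `Finset ℝ`. -/

/-- Decrease the remaining capacity of server `m` by one. -/
def decCap (c : ℝ → ℕ) (m : ℝ) : ℝ → ℕ := fun x => if x = m then c x - 1 else c x

/-- Remaining capacities after a list of matches. -/
def useCaps : (ℝ → ℕ) → List ℝ → (ℝ → ℕ)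
  | c, [] => c
  | c, m :: ms => useCaps (decCap c m) ms

/-- The set of servers that are still free. -/
def freeOf (S : Finset ℝ) (c : ℝ → ℕ) : Finset ℝ := S.filter fun x => 0 < c x

/-- Run an algorithm given by a choice function `f` (mapping the position of the
current request and the current set of free servers to the chosen server)
on a request sequence, producing the list of matched servers. -/
def runC (S : Finset ℝ) (f : ℝ → Finset ℝ → ℝ) : (ℝ → ℕ) → List ℝ → List ℝ
  | _, [] => []
  | c, r :: rs => f r (freeOf S c) :: runC S f (decCap c (f r (freeOf S c))) rs

/-- The server with which the algorithm matches the `i`-th request (0-indexed). -/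
def mtch (S : Finset ℝ) (f : ℝ → Finset ℝ → ℝ) (c : ℝ → ℕ) (σ : List ℝ) (i : ℕ) : ℝ :=
  (runC S f c σ).getD i 0

/-- Total cost incurred by the algorithm on a request sequence. -/
def algCost (S : Finset ℝ) (f : ℝ → Finset ℝ → ℝ) (c : ℝ → ℕ) (σ : List ℝ) : ℝ :=
  ((σ.zip (runC S f c σ)).map fun p => |p.1 - p.2|).sum

def totalCap (S : Finset ℝ) (c : ℝ → ℕ) : ℕ := ∑ x ∈ S, c x

/-- A valid request sequence: at most as many requests as total capacity. -/
def ValidSeq (S : Finset ℝ) (c : ℝ → ℕ) (σ : List ℝ) : Prop := σ.length ≤ totalCap S c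

/-- A valid (offline) assignment of requests to servers. -/
def ValidAssign (S : Finset ℝ) (c : ℝ → ℕ) (σ : List ℝ) (m : ℕ → ℝ) : Prop :=
  (∀ i < σ.length, m i ∈ S) ∧
  ∀ x ∈ S, ((List.range σ.length).filter fun i => m i = x).length ≤ c x

def assignCost (σ : List ℝ) (m : ℕ → ℝ) : ℝ :=
  ∑ i ∈ Finset.range σ.length, |σ.getD i 0 - m i|

/-- Cost of an optimal offline assignment. -/
def Opt (S : Finset ℝ) (c : ℝ → ℕ) (σ : List ℝ) : ℝ :=
  sInf { t | ∃ m, ValidAssign S c σ m ∧ assignCost σ m = t }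

/-- Unit capacities. -/
def c1 : ℝ → ℕ := fun _ => 1

/-- The set of servers still free after the first `t` matches of `ms`. -/
def freeAfter (S : Finset ℝ) (c : ℝ → ℕ) (ms : List ℝ) (t : ℕ) : Finset ℝ :=
  S.filter fun x => (ms.take t).count x < c x

/-! ### MPFS algorithms -/

/-- A choice function is an MPFS algorithm if it is given by a family of linear
orders (priorities, encoded by an injective rank function) on the servers, one for
each request position, and selects the free server with the highest priority. -/
def IsMPFS (S : Finset ℝ) (f : ℝ → Finset ℝ → ℝ) : Prop :=
  ∃ rank : ℝ → ℝ → ℕ,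
    (∀ r : ℝ, Set.InjOn (rank r) (S : Set ℝ)) ∧
    ∀ (r : ℝ) (F : Finset ℝ), F ⊆ S → F.Nonempty →
      f r F ∈ F ∧ ∀ y ∈ F, rank r (f r F) ≤ rank r y

/-! ### Geometry of the server layout -/

/-- `a` and `b` are adjacent servers of `T` with `a < b`. -/
def IsGapPair (T : Finset ℝ) (a b : ℝ) : Prop :=
  a ∈ T ∧ b ∈ T ∧ a < b ∧ ∀ x ∈ T, x ≤ a ∨ b ≤ x

/-- The maximum distance between two adjacent servers. -/
def maxGap (T : Finset ℝ) : ℝ := sSup { d | ∃ a b, IsGapPair T a b ∧ d = b - a }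

/-- The minimum distance between two adjacent servers. -/
def minGap (T : Finset ℝ) : ℝ := sInf { d | ∃ a b, IsGapPair T a b ∧ d = b - a }

/-- `L(T)`: the ratio of the diameter of `T` to its maximum gap (0 if `|T| ≤ 1`). -/
def Lval (T : Finset ℝ) : ℝ :=
  if 2 ≤ T.card then (sSup (T : Set ℝ) - sInf (T : Set ℝ)) / maxGap T else 0

/-- `α(S) = max_{T ⊆ S} L(T)`. -/
def alpha (S : Finset ℝ) : ℝ :=
  (S.powerset.image Lval).max'
    ⟨Lval ∅, Finset.mem_image_of_mem _ (Finset.empty_mem_powerset S)⟩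

/-- The aspect ratio `U(S)`: diameter over minimum gap. -/
def Uval (S : Finset ℝ) : ℝ := (sSup (S : Set ℝ) - sInf (S : Set ℝ)) / minGap S

/-! ### Surrounding servers -/

/-- `x` is a surrounding server of a request at `r` among the free servers `F`. -/
def IsSurrounding (F : Finset ℝ) (r x : ℝ) : Prop :=
  x ∈ F ∧
    (if r ∈ F then x = r
     else (x < r ∧ ∀ y ∈ F, y ≤ x ∨ r < y) ∨ (r < x ∧ ∀ y ∈ F, y < r ∨ x ≤ y))

/-- No element of `F` lies strictly between `u` and `v`. -/
def NoFreeBetween (F : Finset ℝ) (u v : ℝ) : Prop :=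
  ∀ y ∈ F, ¬ (min u v < y ∧ y < max u v)

/-- A choice-function algorithm is surrounding-oriented if on every request
sequence it matches every request with one of its surrounding servers. -/
def SurrOriented (S : Finset ℝ) (f : ℝ → Finset ℝ → ℝ) : Prop :=
  ∀ (c : ℝ → ℕ) (σ : List ℝ), ValidSeq S c σ → ∀ i < σ.length,
    IsSurrounding (freeAfter S c (runC S f c σ) i) (σ.getD i 0) (mtch S f c σ i)

/-! ### Faithful algorithms -/

/-- `τ` is closer than `σ` with respect to the algorithm. -/
def Closer (S : Finset ℝ) (f : ℝ → Finset ℝ → ℝ) (c : ℝ → ℕ) (σ τ : List ℝ) : Prop :=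
  τ.length = σ.length ∧
  (∀ i < σ.length, τ.getD i 0 ∈ Set.uIcc (σ.getD i 0) (mtch S f c σ i)) ∧
  ∃ i < σ.length, |τ.getD i 0 - mtch S f c σ i| < |σ.getD i 0 - mtch S f c σ i|

/-- A faithful algorithm matches a closer request sequence with the same servers. -/
def FaithfulC (S : Finset ℝ) (f : ℝ → Finset ℝ → ℝ) : Prop :=
  ∀ (c : ℝ → ℕ) (σ τ : List ℝ), ValidSeq S c σ → Closer S f c σ τ →
    ∀ i < σ.length, mtch S f c τ i = mtch S f c σ i

/-- `σ` is opposite w.r.t. the algorithm: there is an optimal assignment `m` such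
that every request lies between its online server and its offline server. -/
def OppositeC (S : Finset ℝ) (f : ℝ → Finset ℝ → ℝ) (c : ℝ → ℕ) (σ : List ℝ) : Prop :=
  ∃ m : ℕ → ℝ, ValidAssign S c σ m ∧ assignCost σ m = Opt S c σ ∧
    ∀ i < σ.length, σ.getD i 0 ∈ Set.uIcc (mtch S f c σ i) (m i)

/-! ### Hybrid algorithms (unit capacities) -/

/-- The list of matches of the hybrid algorithm `H_{i,s}` (with `i` 1-indexed):
the first `i-1` requests are matched as by the algorithm, the `i`-th is matched
with `s`, and the rest are matched by the algorithm's choice function. -/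
def hybridRun (S : Finset ℝ) (f : ℝ → Finset ℝ → ℝ) (c : ℝ → ℕ)
    (σ : List ℝ) (i : ℕ) (s : ℝ) : List ℝ :=
  runC S f c (σ.take (i-1)) ++
    s :: runC S f (decCap (useCaps c (runC S f c (σ.take (i-1)))) s) (σ.drop i)

/-- The data produced by the singleton-difference lemma for the hybrid `H_{i,s}`:
for `i ≤ t ≤ t*` the free sets of `A` and of `H_{i,s}` differ exactly by the
singletons `{a t}` and `{h t}`, and they agree for `t ≥ t* + 1`. -/
def HybridData (S : Finset ℝ) (f : ℝ → Finset ℝ → ℝ) (σ : List ℝ)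
    (i : ℕ) (s : ℝ) (tstar : ℕ) (a h : ℕ → ℝ) : Prop :=
  i ≤ tstar ∧ tstar + 1 ≤ S.card ∧
  a i = s ∧ h i = mtch S f c1 σ (i-1) ∧
  (∀ t, i ≤ t → t ≤ tstar →
    freeAfter S c1 (runC S f c1 σ) t \ freeAfter S c1 (hybridRun S f c1 σ i s) t = {a t} ∧
    freeAfter S c1 (hybridRun S f c1 σ i s) t \ freeAfter S c1 (runC S f c1 σ) t = {h t}) ∧
  ∀ t, tstar + 1 ≤ t →
    freeAfter S c1 (runC S f c1 σ) t = freeAfter S c1 (hybridRun S f c1 σ i s) t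

/-! ### The condition `C(A,T)` -/

/-- Condition (C3). -/
def C3 (S : Finset ℝ) (f : ℝ → Finset ℝ → ℝ) : Prop :=
  2 ≤ S.card →
  ∀ σ : List ℝ, σ.length = S.card →
  ∀ i, 1 ≤ i → i ≤ S.card →
  ∀ s ∈ freeAfter S c1 (runC S f c1 σ) (i-1),
    s ≠ mtch S f c1 σ (i-1) →
    (IsSurrounding (freeAfter S c1 (runC S f c1 σ) (i-1)) (σ.getD (i-1) 0) s ∨
      ((∃! x, IsSurrounding (freeAfter S c1 (runC S f c1 σ) (i-1)) (σ.getD (i-1) 0) x) ∧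
        NoFreeBetween (freeAfter S c1 (runC S f c1 σ) (i-1)) s (mtch S f c1 σ (i-1)))) →
    ∀ tstar a h, HybridData S f σ i s tstar a h →
      |h tstar - σ.getD (i-1) 0| ≤ alpha S * |σ.getD (i-1) 0 - a i|

/-- The condition `C(A,S)`: faithful, surrounding-oriented, and (C3). -/
def CProp (S : Finset ℝ) (f : ℝ → Finset ℝ → ℝ) : Prop :=
  FaithfulC S f ∧ SurrOriented S f ∧ C3 S f

/-! ### The PTCP algorithm -/

/-- The critical point offset `x = D(Δ₂+D)/(Δ₁+Δ₂+2D)`. -/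
def ptcpX (S : Finset ℝ) (sa sb : ℝ) : ℝ :=
  (sb - sa) * ((sSup (S : Set ℝ) - sb) + (sb - sa)) /
    ((sa - sInf (S : Set ℝ)) + (sSup (S : Set ℝ) - sb) + 2 * (sb - sa))

/-- `IsPTCP S f` holds iff `f` behaves (on nonempty sets of free servers of `S`)
like the recursively defined algorithm PTCP: split `S` at (some) maximum gap
`(sa, sb)` into `S₁` and `S₂`, requests at most `sa + x` preferring `S₁`,
requests beyond preferring `S₂`. -/
inductive IsPTCP : Finset ℝ → (ℝ → Finset ℝ → ℝ) → Prop
  | single (s : ℝ) (f : ℝ → Finset ℝ → ℝ)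
      (h : ∀ (r : ℝ) (F : Finset ℝ), F ⊆ ({s} : Finset ℝ) → F.Nonempty → f r F = s) :
      IsPTCP {s} f
  | split (S : Finset ℝ) (f f₁ f₂ : ℝ → Finset ℝ → ℝ) (sa sb : ℝ)
      (hcard : 2 ≤ S.card) (hsa : sa ∈ S) (hsb : sb ∈ S) (hlt : sa < sb)
      (hadj : ∀ x ∈ S, x ≤ sa ∨ sb ≤ x)
      (hmax : sb - sa = maxGap S)
      (h1 : IsPTCP (S.filter (· ≤ sa)) f₁)
      (h2 : IsPTCP (S.filter (sb ≤ ·)) f₂)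
      (hf : ∀ (r : ℝ) (F : Finset ℝ), F ⊆ S → F.Nonempty →
        f r F =
          if ¬(F.filter (sb ≤ ·)).Nonempty ∨
             (r ≤ sa + ptcpX S sa sb ∧ (F.filter (· ≤ sa)).Nonempty)
          then f₁ r (F.filter (· ≤ sa))
          else f₂ r (F.filter (sb ≤ ·))) :
      IsPTCP S f

/-! ### The extended algorithm `A_{d,x}` -/

/-- The algorithm `A_{d,x}`: requests at most `sk + x` are served by `A` on `S`
(except when all of `S` is full, then by `s_{k+1}`), requests beyond `sk + x`
are served by `s_{k+1}` (except when it is full, then by `A` on `S`). -/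
def extChoice (S : Finset ℝ) (f : ℝ → Finset ℝ → ℝ) (sk skp1 x : ℝ) :
    ℝ → Finset ℝ → ℝ :=
  fun r F =>
    if r ≤ sk + x then
      (if (F ∩ S).Nonempty then f r (F ∩ S) else skp1)
    else
      (if skp1 ∈ F then skp1 else f r (F ∩ S))

/-! ### General deterministic online algorithms -/

/-- The server with which the online algorithm `A` (which sees the requests
processed so far and the current request) matches the `i`-th request (0-indexed). -/
def omatch (A : List ℝ → ℝ → ℝ) (σ : List ℝ) (i : ℕ) : ℝ := A (σ.take i) (σ.getD i 0)

def ocost (A : List ℝ → ℝ → ℝ) (σ : List ℝ) : ℝ :=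
  ∑ i ∈ Finset.range σ.length, |σ.getD i 0 - omatch A σ i|

/-- The set of servers free for the online algorithm just before the `i`-th request. -/
def ofree (S : Finset ℝ) (c : ℝ → ℕ) (A : List ℝ → ℝ → ℝ) (σ : List ℝ) (i : ℕ) :
    Finset ℝ :=
  S.filter fun x => ((List.range i).filter fun j => omatch A σ j = x).length < c x

/-- `A` is a (correct) deterministic online algorithm for `OFAL(S,c)`:
it always matches a request with a free server. -/
def IsOnline (S : Finset ℝ) (c : ℝ → ℕ) (A : List ℝ → ℝ → ℝ) : Prop :=
  ∀ σ : List ℝ, ValidSeq S c σ → ∀ i < σ.length, omatch A σ i ∈ ofree S c A σ i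

def OSurrOriented (S : Finset ℝ) (c : ℝ → ℕ) (A : List ℝ → ℝ → ℝ) : Prop :=
  ∀ σ : List ℝ, ValidSeq S c σ → ∀ i < σ.length,
    IsSurrounding (ofree S c A σ i) (σ.getD i 0) (omatch A σ i)

def OCloser (A : List ℝ → ℝ → ℝ) (σ τ : List ℝ) : Prop :=
  τ.length = σ.length ∧
  (∀ i < σ.length, τ.getD i 0 ∈ Set.uIcc (σ.getD i 0) (omatch A σ i)) ∧
  ∃ i < σ.length, |τ.getD i 0 - omatch A σ i| < |σ.getD i 0 - omatch A σ i|

def OFaithful (S : Finset ℝ) (c : ℝ → ℕ) (A : List ℝ → ℝ → ℝ) : Prop :=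
  ∀ σ τ : List ℝ, ValidSeq S c σ → OCloser A σ τ →
    ∀ i < σ.length, omatch A τ i = omatch A σ i

def OOpposite (S : Finset ℝ) (c : ℝ → ℕ) (A : List ℝ → ℝ → ℝ) (σ : List ℝ) : Prop :=
  ∃ m : ℕ → ℝ, ValidAssign S c σ m ∧ assignCost σ m = Opt S c σ ∧
    ∀ i < σ.length, σ.getD i 0 ∈ Set.uIcc (omatch A σ i) (m i)

/-- `Rate(σ) = A(σ)/Opt(σ)`, with the conventions for `Opt(σ) = 0`. -/
def Rate (S : Finset ℝ) (c : ℝ → ℕ) (A : List ℝ → ℝ → ℝ) (σ : List ℝ) : EReal :=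
  if 0 < Opt S c σ then (((ocost A σ) / Opt S c σ : ℝ) : EReal)
  else if 0 < ocost A σ then ⊤ else 1

/-! ### The permutation algorithm -/

/-- An execution of the permutation algorithm on `σ`, producing matches `p`:
there is a chain of minimum-cost assignments of the prefixes whose used server
multisets grow one server at a time, `p i` being the server added at step `i`. -/
def PermExec (S : Finset ℝ) (c : ℝ → ℕ) (σ : List ℝ) (p : ℕ → ℝ) : Prop :=
  ∃ M : ℕ → ℕ → ℝ,
    (∀ i ≤ σ.length,
      ValidAssign S c (σ.take i) (M i) ∧
      assignCost (σ.take i) (M i) = Opt S c (σ.take i)) ∧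
    ∀ i < σ.length,
      (((List.range (i+1)).map (M (i+1)) : List ℝ) : Multiset ℝ) =
        p i ::ₘ (((List.range i).map (M i) : List ℝ) : Multiset ℝ)

def execCost (σ : List ℝ) (p : ℕ → ℝ) : ℝ :=
  ∑ i ∈ Finset.range σ.length, |σ.getD i 0 - p i|

section StatementFiveAux


attribute [local instance 10] Classical.propDecidable
def spick (F : Finset ℝ) (r b : ℝ) : ℝ :=
  if r ∈ F then r
  else if b < r then
    (if h : (F.filter (· < r)).Nonempty then (F.filter (· < r)).max' h else 0)
  else
    (if h : (F.filter (r < ·)).Nonempty then (F.filter (r < ·)).min' h else 0)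

theorem spick_spec (F : Finset ℝ) (r b : ℝ) (hb : b ∈ F) :
    IsSurrounding F r (spick F r b) ∧ spick F r b ∈ Set.uIcc r b := by
  by_cases hr : r ∈ F
  · refine ⟨⟨by simpa [spick, hr], by simp [spick, hr, IsSurrounding]⟩, ?_⟩
    simp [spick, hr, Set.left_mem_uIcc]
  · rcases lt_trichotomy b r with hbr | hbr | hbr
    · have hne : (F.filter (· < r)).Nonempty := ⟨b, by simp [hb, hbr]⟩
      have hm : spick F r b = (F.filter (· < r)).max' hne := by
        simp only [spick, if_neg hr, if_pos hbr, dif_pos hne]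
      have hmem := (F.filter (· < r)).max'_mem hne
      rw [Finset.mem_filter] at hmem
      constructor
      · refine ⟨by rw [hm]; exact hmem.1, ?_⟩
        rw [if_neg hr, hm]
        left
        refine ⟨hmem.2, fun y hy => ?_⟩
        rcases lt_trichotomy y r with h1 | h1 | h1
        · exact Or.inl (Finset.le_max' _ _ (by simp [hy, h1]))
        · exact absurd (h1 ▸ hy) hr
        · exact Or.inr h1
      · have hble : b ≤ (F.filter (· < r)).max' hne := Finset.le_max' _ _ (by simp [hb, hbr])
        rw [hm]; rw [Set.mem_uIcc]; right; exact ⟨hble, le_of_lt hmem.2⟩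
    · exact absurd (hbr ▸ hb) hr
    · have hne : (F.filter (r < ·)).Nonempty := ⟨b, by simp [hb, hbr]⟩
      have hm : spick F r b = (F.filter (r < ·)).min' hne := by
        simp only [spick, if_neg hr, if_neg (not_lt.mpr (le_of_lt hbr)), dif_pos hne]
      have hmem := (F.filter (r < ·)).min'_mem hne
      rw [Finset.mem_filter] at hmem
      constructor
      · refine ⟨by rw [hm]; exact hmem.1, ?_⟩
        rw [if_neg hr, hm]
        right
        refine ⟨hmem.2, fun y hy => ?_⟩
        rcases lt_trichotomy y r with h1 | h1 | h1
        · exact Or.inl h1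
        · exact absurd (h1 ▸ hy) hr
        · exact Or.inr (Finset.min'_le _ _ (by simp [hy, h1]))
      · have hble : (F.filter (r < ·)).min' hne ≤ b := Finset.min'_le _ _ (by simp [hb, hbr])
        rw [hm]; rw [Set.mem_uIcc]; left; exact ⟨le_of_lt hmem.2, hble⟩

theorem abs_add_mid {r b x : ℝ} (hx : x ∈ Set.uIcc r b) :
    |r - x| + |x - b| = |r - b| := by
  rw [Set.mem_uIcc] at hx
  rcases hx with ⟨h1, h2⟩ | ⟨h1, h2⟩ <;>
    rcases abs_cases (r - x) with ⟨e1, _⟩ | ⟨e1, _⟩ <;>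
    rcases abs_cases (x - b) with ⟨e2, _⟩ | ⟨e2, _⟩ <;>
    rcases abs_cases (r - b) with ⟨e3, _⟩ | ⟨e3, _⟩ <;> linarith



def pairCost (L : List (ℝ × ℝ)) : ℝ := (L.map fun pq => |pq.1 - pq.2|).sum
def fCnt (L : List (ℝ × ℝ)) (x : ℝ) : ℕ := (L.map Prod.fst).count x
def sCnt (L : List (ℝ × ℝ)) (x : ℝ) : ℕ := (L.map Prod.snd).count x

theorem perm_cons_erase' {α : Type*} [BEq α] [LawfulBEq α] {a : α} {l : List α}
    (h : a ∈ l) : l.Perm (a :: l.erase a) := by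
  induction l with
  | nil => simp at h
  | cons b l ih =>
    rcases eq_or_ne b a with rfl | hne
    · simp [List.erase_cons_head]
    · have ha : a ∈ l := by
        rcases List.mem_cons.mp h with h' | h'
        · exact absurd h'.symm hne
        · exact h'
      rw [List.erase_cons_tail (by simpa using hne)]
      exact ((ih ha).cons b).trans (List.Perm.swap a b _)

def mergeStep (L : List (ℝ × ℝ)) : Option (List (ℝ × ℝ)) :=
  if h1 : ∃ pq ∈ L, pq.1 = pq.2 then some (L.erase h1.choose)
  else if h2 : ∃ pq ∈ L, ∃ pq' ∈ L.erase pq, pq'.1 = pq.2 then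
    some ((h2.choose.1, h2.choose_spec.2.choose.2) ::
      ((L.erase h2.choose).erase h2.choose_spec.2.choose))
  else none

theorem fCnt_perm {L L' : List (ℝ × ℝ)} (h : L.Perm L') (x : ℝ) : fCnt L x = fCnt L' x :=
  (h.map Prod.fst).count_eq x

theorem sCnt_perm {L L' : List (ℝ × ℝ)} (h : L.Perm L') (x : ℝ) : sCnt L x = sCnt L' x :=
  (h.map Prod.snd).count_eq x

theorem pairCost_perm {L L' : List (ℝ × ℝ)} (h : L.Perm L') : pairCost L = pairCost L' :=
  (h.map _).sum_eq

theorem fCnt_cons (pq : ℝ × ℝ) (L : List (ℝ × ℝ)) (x : ℝ) :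
    fCnt (pq :: L) x = fCnt L x + (if pq.1 = x then 1 else 0) := by
  simp [fCnt, List.count_cons]

theorem sCnt_cons (pq : ℝ × ℝ) (L : List (ℝ × ℝ)) (x : ℝ) :
    sCnt (pq :: L) x = sCnt L x + (if pq.2 = x then 1 else 0) := by
  simp [sCnt, List.count_cons]

theorem pairCost_cons (pq : ℝ × ℝ) (L : List (ℝ × ℝ)) :
    pairCost (pq :: L) = |pq.1 - pq.2| + pairCost L := by
  simp [pairCost]

theorem pairCost_nonneg (L : List (ℝ × ℝ)) : 0 ≤ pairCost L := by
  apply List.sum_nonneg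
  intro x hx
  rcases List.mem_map.mp hx with ⟨pq, _, rfl⟩
  exact abs_nonneg _

theorem mergeStep_some (L L' : List (ℝ × ℝ)) (h : mergeStep L = some L') :
    L'.length < L.length ∧
    (∀ x, (fCnt L' x : ℤ) - sCnt L' x = fCnt L x - sCnt L x) ∧
    pairCost L' ≤ pairCost L ∧
    (∀ pq' ∈ L', ∃ pq ∈ L, pq'.1 = pq.1 ∨ pq'.1 = pq.2) ∧
    (∀ pq' ∈ L', ∃ pq ∈ L, pq'.2 = pq.1 ∨ pq'.2 = pq.2) := by
  unfold mergeStep at h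
  split_ifs at h with h1 h2
  · -- erase a pair with fst = snd
    obtain ⟨hmem, heq⟩ := h1.choose_spec
    set pq := h1.choose with hpq
    have hperm : L.Perm (pq :: L.erase pq) := perm_cons_erase' hmem
    have hL' : L' = L.erase pq := by injection h.symm
    subst hL'
    refine ⟨?_, fun x => ?_, ?_, ?_, ?_⟩
    · have h4 := List.length_erase_of_mem hmem
      have h5 := List.length_pos_of_mem hmem
      omega
    · rw [fCnt_perm hperm x, sCnt_perm hperm x, fCnt_cons, sCnt_cons, heq]
      push_cast; ring
    · rw [pairCost_perm hperm, pairCost_cons, heq]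
      simp
    · exact fun pq' h' => ⟨pq', List.mem_of_mem_erase h', Or.inl rfl⟩
    · exact fun pq' h' => ⟨pq', List.mem_of_mem_erase h', Or.inr rfl⟩
  · -- merge two pairs
    obtain ⟨hmem, hrest⟩ := h2.choose_spec
    set pq := h2.choose with hpq
    obtain ⟨hmem', heq'⟩ := hrest.choose_spec
    set pq' := hrest.choose with hpq'
    have hperm1 : L.Perm (pq :: L.erase pq) := perm_cons_erase' hmem
    have hperm2 : (L.erase pq).Perm (pq' :: (L.erase pq).erase pq') :=
      perm_cons_erase' hmem'
    have hperm : L.Perm (pq :: pq' :: (L.erase pq).erase pq') :=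
      hperm1.trans (hperm2.cons pq)
    have hL' : L' = (pq.1, pq'.2) :: ((L.erase pq).erase pq') := by injection h.symm
    subst hL'
    have hmemL' : pq' ∈ L := List.mem_of_mem_erase hmem'
    refine ⟨?_, fun x => ?_, ?_, ?_, ?_⟩
    · have h3 := hperm.length_eq
      simp only [List.length_cons] at h3 ⊢
      omega
    · rw [fCnt_perm hperm x, sCnt_perm hperm x]
      simp only [fCnt_cons, sCnt_cons, heq']
      push_cast; ring
    · rw [pairCost_perm hperm]
      simp only [pairCost_cons]
      have htri : |pq.1 - pq'.2| ≤ |pq.1 - pq.2| + |pq'.1 - pq'.2| := by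
        rw [heq']
        exact abs_sub_le _ _ _
      linarith
    · intro pq'' h''
      rcases List.mem_cons.mp h'' with rfl | h''
      · exact ⟨pq, hmem, Or.inl rfl⟩
      · exact ⟨pq'', List.mem_of_mem_erase (List.mem_of_mem_erase h''), Or.inl rfl⟩
    · intro pq'' h''
      rcases List.mem_cons.mp h'' with rfl | h''
      · exact ⟨pq', hmemL', Or.inr rfl⟩
      · exact ⟨pq'', List.mem_of_mem_erase (List.mem_of_mem_erase h''), Or.inr rfl⟩

theorem mergeStep_none_disjoint (L : List (ℝ × ℝ)) (h : mergeStep L = none) (x : ℝ) :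
    ¬(0 < fCnt L x ∧ 0 < sCnt L x) := by
  unfold mergeStep at h
  split_ifs at h with h1 h2
  push_neg at h1 h2
  rintro ⟨hf, hs⟩
  rw [fCnt, List.count_pos_iff] at hf
  rw [sCnt, List.count_pos_iff] at hs
  obtain ⟨pq', hmem', rfl⟩ := List.mem_map.mp hf
  obtain ⟨pq, hmem, hx⟩ := List.mem_map.mp hs
  by_cases hne : pq' = pq
  · subst hne
    exact h1 pq' hmem' hx.symm
  · exact h2 pq hmem pq' (List.mem_erase_of_ne hne |>.mpr hmem') hx.symm

def norm : ℕ → List (ℝ × ℝ) → List (ℝ × ℝ)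
  | 0, L => L
  | n+1, L =>
    match mergeStep L with
    | none => L
    | some L' => norm n L'

theorem norm_spec (n : ℕ) (L : List (ℝ × ℝ)) :
    (∀ x, (fCnt (norm n L) x : ℤ) - sCnt (norm n L) x = fCnt L x - sCnt L x) ∧
    pairCost (norm n L) ≤ pairCost L ∧
    (∀ pq' ∈ norm n L, ∃ pq ∈ L, pq'.1 = pq.1 ∨ pq'.1 = pq.2) ∧
    (∀ pq' ∈ norm n L, ∃ pq ∈ L, pq'.2 = pq.1 ∨ pq'.2 = pq.2) ∧
    (L.length ≤ n → ∀ x, ¬(0 < fCnt (norm n L) x ∧ 0 < sCnt (norm n L) x)) := by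
  induction n generalizing L with
  | zero =>
    refine ⟨fun x => rfl, le_refl _, fun pq' h => ⟨pq', h, Or.inl rfl⟩,
      fun pq' h => ⟨pq', h, Or.inr rfl⟩, fun hlen x => ?_⟩
    have : L = [] := List.length_eq_zero_iff.mp (Nat.le_zero.mp hlen)
    subst this
    simp [norm, fCnt, sCnt]
  | succ n ih =>
    rcases hm : mergeStep L with _ | L'
    · have hnorm : norm (n+1) L = L := by rw [norm, hm]
      rw [hnorm]
      exact ⟨fun x => rfl, le_refl _, fun pq' h => ⟨pq', h, Or.inl rfl⟩,
        fun pq' h => ⟨pq', h, Or.inr rfl⟩, fun _ => mergeStep_none_disjoint L hm⟩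
    · have hnorm : norm (n+1) L = norm n L' := by rw [norm, hm]
      rw [hnorm]
      obtain ⟨hlen, hbal, hcost, hf, hs⟩ := mergeStep_some L L' hm
      obtain ⟨ibal, icost, ifm, ism, idis⟩ := ih L'
      refine ⟨fun x => by rw [ibal x, hbal x], le_trans icost hcost, ?_, ?_, ?_⟩
      · intro pq' h'
        obtain ⟨pq₂, h₂, hor⟩ := ifm pq' h'
        rcases hor with he | he
        · obtain ⟨pq₃, h₃, hor₃⟩ := hf pq₂ h₂
          exact ⟨pq₃, h₃, by rw [he]; exact hor₃⟩
        · obtain ⟨pq₃, h₃, hor₃⟩ := hs pq₂ h₂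
          exact ⟨pq₃, h₃, by rw [he]; exact hor₃⟩
      · intro pq' h'
        obtain ⟨pq₂, h₂, hor⟩ := ism pq' h'
        rcases hor with he | he
        · obtain ⟨pq₃, h₃, hor₃⟩ := hf pq₂ h₂
          exact ⟨pq₃, h₃, by rw [he]; exact hor₃⟩
        · obtain ⟨pq₃, h₃, hor₃⟩ := hs pq₂ h₂
          exact ⟨pq₃, h₃, by rw [he]; exact hor₃⟩
      · intro hlen'
        exact idis (by omega)

def normL (L : List (ℝ × ℝ)) : List (ℝ × ℝ) := norm L.length L



structure SimSt where
  hist : List ℝ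
  mA : List ℝ
  mR : List ℝ
  L : List (ℝ × ℝ)

def freeR (S : Finset ℝ) (c : ℝ → ℕ) (m : List ℝ) : Finset ℝ :=
  S.filter fun x => m.count x < c x

def pickB (S : Finset ℝ) (c : ℝ → ℕ) (A : List ℝ → ℝ → ℝ) (st : SimSt) (r : ℝ) :
    ℝ × List (ℝ × ℝ) :=
  if A st.hist r ∈ freeR S c st.mR then (A st.hist r, st.L)
  else
    match st.L.find? (fun pq => pq.1 == A st.hist r) with
    | some pq => (pq.2, st.L.erase pq)
    | none => (if h : (freeR S c st.mR).Nonempty then (freeR S c st.mR).min' h else 0, st.L)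

def pickAux (S : Finset ℝ) (c : ℝ → ℕ) (A : List ℝ → ℝ → ℝ) (st : SimSt) (r : ℝ) :
    ℝ × List (ℝ × ℝ) :=
  (spick (freeR S c st.mR) r (pickB S c A st r).1,
   normL ((spick (freeR S c st.mR) r (pickB S c A st r).1, (pickB S c A st r).1)
      :: (pickB S c A st r).2))

def pickR (S : Finset ℝ) (c : ℝ → ℕ) (A : List ℝ → ℝ → ℝ) (st : SimSt) (r : ℝ) :
    ℝ × List (ℝ × ℝ) :=
  if A st.hist r ∈ freeR S c st.mR ∧
      IsSurrounding (freeR S c st.mR) r (A st.hist r) then (A st.hist r, st.L)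
  else pickAux S c A st r

def simStep (S : Finset ℝ) (c : ℝ → ℕ) (A : List ℝ → ℝ → ℝ) (st : SimSt) (r : ℝ) : SimSt :=
  ⟨st.hist ++ [r], st.mA ++ [A st.hist r], st.mR ++ [(pickR S c A st r).1], (pickR S c A st r).2⟩

def simSt (S : Finset ℝ) (c : ℝ → ℕ) (A : List ℝ → ℝ → ℝ) (h : List ℝ) : SimSt :=
  h.foldl (simStep S c A) ⟨[], [], [], []⟩

def algR (S : Finset ℝ) (c : ℝ → ℕ) (A : List ℝ → ℝ → ℝ) : List ℝ → ℝ → ℝ :=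
  fun h r => (pickR S c A (simSt S c A h) r).1

theorem simSt_hist (S : Finset ℝ) (c : ℝ → ℕ) (A : List ℝ → ℝ → ℝ) (h : List ℝ) :
    (simSt S c A h).hist = h := by
  suffices H : ∀ (l : List ℝ) (st : SimSt), (l.foldl (simStep S c A) st).hist = st.hist ++ l by
    simpa [simSt] using H h ⟨[], [], [], []⟩
  intro l
  induction l with
  | nil => simp
  | cons b l ih => intro st; simp [ih, simStep]

theorem simSt_append (S : Finset ℝ) (c : ℝ → ℕ) (A : List ℝ → ℝ → ℝ) (h : List ℝ) (r : ℝ) :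
    simSt S c A (h ++ [r]) = simStep S c A (simSt S c A h) r := by
  simp [simSt, List.foldl_append]

theorem take_succ_getD (σ : List ℝ) (i : ℕ) (hi : i < σ.length) :
    σ.take (i+1) = σ.take i ++ [σ.getD i 0] := by
  rw [List.take_succ, List.getElem?_eq_getElem hi, List.getD_eq_getElem σ 0 hi]
  rfl

theorem simSt_mA (S : Finset ℝ) (c : ℝ → ℕ) (A : List ℝ → ℝ → ℝ) (σ : List ℝ) :
    ∀ i ≤ σ.length, (simSt S c A (σ.take i)).mA = (List.range i).map (fun j => omatch A σ j) := by
  intro i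
  induction i with
  | zero => intro _; rfl
  | succ i ih =>
    intro hi
    have hi' : i < σ.length := hi
    rw [take_succ_getD σ i hi', simSt_append, List.range_succ, List.map_append]
    show (simSt S c A (σ.take i)).mA ++ [A ((simSt S c A (σ.take i)).hist) (σ.getD i 0)] = _
    rw [ih (le_of_lt hi'), simSt_hist]
    rfl

theorem simSt_mR (S : Finset ℝ) (c : ℝ → ℕ) (A : List ℝ → ℝ → ℝ) (σ : List ℝ) :
    ∀ i ≤ σ.length,
      (simSt S c A (σ.take i)).mR = (List.range i).map (fun j => omatch (algR S c A) σ j) := by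
  intro i
  induction i with
  | zero => intro _; rfl
  | succ i ih =>
    intro hi
    have hi' : i < σ.length := hi
    rw [take_succ_getD σ i hi', simSt_append, List.range_succ, List.map_append]
    show (simSt S c A (σ.take i)).mR ++ [(pickR S c A (simSt S c A (σ.take i)) (σ.getD i 0)).1] = _
    rw [ih (le_of_lt hi')]
    rfl

theorem count_map_range (f : ℕ → ℝ) (i : ℕ) (x : ℝ) :
    ((List.range i).map f).count x = ((List.range i).filter fun j => f j = x).length := by
  induction i with
  | zero => simp
  | succ i ih =>
    rw [List.range_succ, List.map_append, List.count_append, List.filter_append,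
      List.length_append, ih]
    by_cases h : f i = x <;> simp [h, List.count_cons]

theorem sum_count_list (S : Finset ℝ) (l : List ℝ) (hl : ∀ a ∈ l, a ∈ S) :
    ∑ x ∈ S, l.count x = l.length := by
  induction l with
  | nil => simp
  | cons b l ih =>
    have hb : b ∈ S := hl b List.mem_cons_self
    have h2 : ∀ a ∈ l, a ∈ S := fun a ha => hl a (List.mem_cons_of_mem b ha)
    have : ∀ x ∈ S, (b :: l).count x = l.count x + if x = b then 1 else 0 := by
      intro x _
      rw [List.count_cons]
      rcases eq_or_ne x b with h | h
      · simp [h]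
      · simp [h, h.symm]
    rw [Finset.sum_congr rfl this, Finset.sum_add_distrib, ih h2, Finset.sum_ite_eq' S b]
    simp [hb]

theorem ofree_eq (S : Finset ℝ) (c : ℝ → ℕ) (B : List ℝ → ℝ → ℝ) (σ : List ℝ) (i : ℕ) :
    ofree S c B σ i = freeR S c ((List.range i).map fun j => omatch B σ j) := by
  unfold ofree freeR
  apply Finset.filter_congr
  intro x _
  rw [count_map_range]

theorem count_snoc (l : List ℝ) (b x : ℝ) :
    (l ++ [b]).count x = l.count x + if b = x then 1 else 0 := by
  rw [List.count_append]
  rcases eq_or_ne b x with h | h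
  · simp [h]
  · simp [h, Ne.symm h]

structure Inv (S : Finset ℝ) (c : ℝ → ℕ) (A : List ℝ → ℝ → ℝ) (σ : List ℝ) (i : ℕ) :
    Prop where
  bal : ∀ x, ((simSt S c A (σ.take i)).mR.count x : ℤ) + sCnt (simSt S c A (σ.take i)).L x
      = (simSt S c A (σ.take i)).mA.count x + fCnt (simSt S c A (σ.take i)).L x
  disj : ∀ x, ¬(0 < fCnt (simSt S c A (σ.take i)).L x ∧ 0 < sCnt (simSt S c A (σ.take i)).L x)
  pairsS : ∀ pq ∈ (simSt S c A (σ.take i)).L, pq.1 ∈ S ∧ pq.2 ∈ S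
  mAcnt : ∀ x ∈ S, (simSt S c A (σ.take i)).mA.count x ≤ c x
  cost : (∑ j ∈ Finset.range i, |σ.getD j 0 - omatch (algR S c A) σ j|)
        + pairCost (simSt S c A (σ.take i)).L
      ≤ ∑ j ∈ Finset.range i, |σ.getD j 0 - omatch A σ j|

theorem Inv_zero (S : Finset ℝ) (c : ℝ → ℕ) (A : List ℝ → ℝ → ℝ) (σ : List ℝ) :
    Inv S c A σ 0 := by
  have h : simSt S c A (σ.take 0) = ⟨[], [], [], []⟩ := rfl
  constructor <;> rw [h] <;> simp [fCnt, sCnt, pairCost]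

theorem main_step {S : Finset ℝ} {c : ℝ → ℕ} {A : List ℝ → ℝ → ℝ}
    (hA : IsOnline S c A) (σ : List ℝ) (hσ : ValidSeq S c σ)
    (i : ℕ) (hi : i < σ.length) (hInv : Inv S c A σ i) :
    Inv S c A σ (i+1) ∧
    omatch (algR S c A) σ i ∈ ofree S c (algR S c A) σ i ∧
    IsSurrounding (ofree S c (algR S c A) σ i) (σ.getD i 0) (omatch (algR S c A) σ i) := by
  obtain ⟨bal, disj, pairsS, mAcnt, cost⟩ := hInv
  set st := simSt S c A (σ.take i) with hst
  set r := σ.getD i 0 with hr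
  set F := freeR S c st.mR with hF
  set a := A st.hist r with ha0
  have hhist : st.hist = σ.take i := simSt_hist S c A (σ.take i)
  have homA : omatch A σ i = a := by rw [omatch, ha0, hhist]
  have homR : omatch (algR S c A) σ i = (pickR S c A st r).1 := rfl
  have hfreeR : ofree S c (algR S c A) σ i = F := by
    rw [ofree_eq, ← simSt_mR S c A σ i (le_of_lt hi)]
  have haF : a ∈ freeR S c st.mA := by
    have h2 := hA σ hσ i hi
    rw [ofree_eq, ← simSt_mA S c A σ i (le_of_lt hi), homA] at h2
    exact h2
  have haS : a ∈ S := (Finset.mem_filter.mp haF).1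
  have haCnt : st.mA.count a < c a := (Finset.mem_filter.mp haF).2
  have hst' : simSt S c A (σ.take (i+1)) = simStep S c A st r := by
    rw [take_succ_getD σ i hi, simSt_append]
  have hmA' : (simSt S c A (σ.take (i+1))).mA = st.mA ++ [a] := by rw [hst']; rfl
  have hmR' : (simSt S c A (σ.take (i+1))).mR = st.mR ++ [(pickR S c A st r).1] := by
    rw [hst']; rfl
  have hL' : (simSt S c A (σ.take (i+1))).L = (pickR S c A st r).2 := by rw [hst']; rfl
  by_cases hmain : a ∈ F ∧ IsSurrounding F r a
  · -- A's choice is free and surrounding: copy it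
    have hpick : pickR S c A st r = (a, st.L) := by rw [pickR, if_pos hmain]
    have hpick1 : (pickR S c A st r).1 = a := by rw [hpick]
    have hpickL : (pickR S c A st r).2 = st.L := by rw [hpick]
    refine ⟨⟨?_, ?_, ?_, ?_, ?_⟩, ?_, ?_⟩
    · intro x
      rw [hmA', hmR', hL', hpick1, hpickL, count_snoc, count_snoc]
      have h1 := bal x
      by_cases h : a = x <;> simp [h] <;> push_cast <;> linarith
    · intro x
      rw [hL', hpickL]
      exact disj x
    · intro pq hpq
      rw [hL', hpickL] at hpq
      exact pairsS pq hpq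
    · intro x hx
      rw [hmA', count_snoc]
      rcases eq_or_ne a x with h | h
      · subst h; simpa using haCnt
      · simp [h]; exact mAcnt x hx
    · rw [hL', hpickL, Finset.sum_range_succ, Finset.sum_range_succ]
      have h1 : omatch (algR S c A) σ i = a := by rw [homR, hpick1]
      rw [h1, homA]
      linarith [cost]
    · rw [hfreeR, homR, hpick1]
      exact hmain.1
    · rw [hfreeR, homR, hpick1]
      exact hmain.2
  · -- repair: pick a surrounding server
    have hpick : pickR S c A st r = pickAux S c A st r := by rw [pickR, if_neg hmain]
    obtain ⟨b, L₀, hbl, hbF, hbal2, hcost2, hpairs2⟩ :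
        ∃ b L₀, pickB S c A st r = (b, L₀) ∧ b ∈ F ∧
          (∀ x, (st.mR.count x : ℤ) + (sCnt L₀ x + (if b = x then 1 else 0))
              = (st.mA.count x + (if a = x then 1 else 0)) + fCnt L₀ x) ∧
          (|r - b| + pairCost L₀ ≤ |r - a| + pairCost st.L) ∧
          (∀ pq ∈ L₀, pq.1 ∈ S ∧ pq.2 ∈ S) := by
      by_cases haF2 : a ∈ F
      · refine ⟨a, st.L, by rw [pickB, if_pos haF2], haF2, ?_, by simp, pairsS⟩
        intro x
        have h1 := bal x
        by_cases h : a = x <;> simp [h] <;> push_cast <;> linarith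
      · -- A's choice is not free for us: it must occur as a first component in L
        have hcnt : c a ≤ st.mR.count a :=
          not_lt.mp fun hlt => haF2 (Finset.mem_filter.mpr ⟨haS, hlt⟩)
        have hfpos : 0 < fCnt st.L a := by
          have h1 := bal a
          omega
        obtain ⟨pq₁, hpq₁L, hpq₁⟩ : ∃ pq ∈ st.L, pq.1 = a := by
          rw [fCnt, List.count_pos_iff] at hfpos
          obtain ⟨pq, hm, he⟩ := List.mem_map.mp hfpos
          exact ⟨pq, hm, he⟩
        obtain ⟨pq', hfind⟩ : ∃ pq', st.L.find? (fun pq => pq.1 == a) = some pq' := by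
          rw [← Option.isSome_iff_exists, List.find?_isSome]
          exact ⟨pq₁, hpq₁L, by simp [hpq₁]⟩
        have hpq'1 : pq'.1 = a := by
          have := List.find?_some hfind
          simpa using this
        have hmem' : pq' ∈ st.L := List.mem_of_find?_eq_some hfind
        have hqS : pq'.2 ∈ S := (pairsS pq' hmem').2
        have hspos : 0 < sCnt st.L pq'.2 := by
          rw [sCnt, List.count_pos_iff]
          exact List.mem_map.mpr ⟨pq', hmem', rfl⟩
        have hqf0 : fCnt st.L pq'.2 = 0 := by
          by_contra h
          exact disj pq'.2 ⟨Nat.pos_of_ne_zero h, hspos⟩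
        have hqcnt : st.mR.count pq'.2 < c pq'.2 := by
          have h1 := bal pq'.2
          have h2 := mAcnt pq'.2 hqS
          omega
        have hqF : pq'.2 ∈ F := Finset.mem_filter.mpr ⟨hqS, hqcnt⟩
        have hperm : st.L.Perm (pq' :: st.L.erase pq') := perm_cons_erase' hmem'
        refine ⟨pq'.2, st.L.erase pq', by rw [pickB, if_neg haF2, hfind], hqF, ?_, ?_, ?_⟩
        · intro x
          have h1 := bal x
          have h2 : fCnt st.L x = fCnt (st.L.erase pq') x + if a = x then 1 else 0 := by
            rw [fCnt_perm hperm, fCnt_cons, hpq'1]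
          have h3 : sCnt st.L x = sCnt (st.L.erase pq') x + if pq'.2 = x then 1 else 0 := by
            rw [sCnt_perm hperm, sCnt_cons]
          by_cases ha : a = x <;> by_cases hq : pq'.2 = x <;>
            simp [ha, hq] at h2 h3 ⊢ <;> omega
        · have h4 : pairCost st.L = |a - pq'.2| + pairCost (st.L.erase pq') := by
            rw [pairCost_perm hperm, pairCost_cons, hpq'1]
          have h5 : |r - pq'.2| ≤ |r - a| + |a - pq'.2| := abs_sub_le _ _ _
          linarith
        · exact fun pq hpq => pairsS pq (List.mem_of_mem_erase hpq)
    have hsp := spick_spec F r b hbF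
    set s' := spick F r b with hs'
    have hs'F : s' ∈ F := hsp.1.1
    have hs'S : s' ∈ S := (Finset.mem_filter.mp hs'F).1
    have hbS : b ∈ S := (Finset.mem_filter.mp hbF).1
    have hmid : |r - s'| + |s' - b| = |r - b| := abs_add_mid hsp.2
    have hpick2 : pickR S c A st r = (s', normL ((s', b) :: L₀)) := by
      rw [hpick, pickAux, hbl]
    have hpick1' : (pickR S c A st r).1 = s' := by rw [hpick2]
    have hpickL' : (pickR S c A st r).2 = normL ((s', b) :: L₀) := by rw [hpick2]
    obtain ⟨nbal, ncost, nf, ns, ndisj⟩ := norm_spec ((s', b) :: L₀).length ((s', b) :: L₀)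
    have ndisj' := ndisj le_rfl
    refine ⟨⟨?_, ?_, ?_, ?_, ?_⟩, ?_, ?_⟩
    · intro x
      rw [hmA', hmR', hL', hpick1', hpickL', count_snoc, count_snoc]
      have h1 := hbal2 x
      have h2 := nbal x
      rw [fCnt_cons, sCnt_cons] at h2
      rw [normL]
      push_cast at h1 h2 ⊢
      by_cases hax : a = x <;> by_cases hsx : s' = x <;> by_cases hbx : b = x <;>
        simp [hax, hsx, hbx] at h1 h2 ⊢ <;> linarith
    · intro x
      rw [hL', hpickL', normL]
      exact ndisj' x
    · intro pq hpq
      rw [hL', hpickL', normL] at hpq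
      obtain ⟨pq₂, hm₂, hor₂⟩ := nf pq hpq
      obtain ⟨pq₃, hm₃, hor₃⟩ := ns pq hpq
      constructor
      · rcases List.mem_cons.mp hm₂ with rfl | hm₂
        · rcases hor₂ with h | h <;> rw [h]
          · exact hs'S
          · exact hbS
        · rcases hor₂ with h | h <;> rw [h]
          · exact (hpairs2 pq₂ hm₂).1
          · exact (hpairs2 pq₂ hm₂).2
      · rcases List.mem_cons.mp hm₃ with rfl | hm₃
        · rcases hor₃ with h | h <;> rw [h]
          · exact hs'S
          · exact hbS
        · rcases hor₃ with h | h <;> rw [h]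
          · exact (hpairs2 pq₃ hm₃).1
          · exact (hpairs2 pq₃ hm₃).2
    · intro x hx
      rw [hmA', count_snoc]
      rcases eq_or_ne a x with h | h
      · subst h; simpa using haCnt
      · simp [h]; exact mAcnt x hx
    · rw [hL', hpickL', Finset.sum_range_succ, Finset.sum_range_succ]
      have h1 : omatch (algR S c A) σ i = s' := by rw [homR, hpick1']
      rw [h1, homA]
      have h6 : pairCost ((s', b) :: L₀) = |s' - b| + pairCost L₀ := pairCost_cons _ _
      have h7 : pairCost (normL ((s', b) :: L₀)) ≤ pairCost ((s', b) :: L₀) := by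
        rw [normL]; exact ncost
      linarith
    · rw [hfreeR, homR, hpick1']
      exact hs'F
    · rw [hfreeR, homR, hpick1']
      exact hsp.1

theorem Inv_all {S : Finset ℝ} {c : ℝ → ℕ} {A : List ℝ → ℝ → ℝ}
    (hA : IsOnline S c A) (σ : List ℝ) (hσ : ValidSeq S c σ) :
    ∀ i ≤ σ.length, Inv S c A σ i := by
  intro i
  induction i with
  | zero => exact fun _ => Inv_zero S c A σ
  | succ i ih =>
    intro hi
    exact (main_step hA σ hσ i hi (ih (le_of_lt hi))).1

theorem algR_online {S : Finset ℝ} {c : ℝ → ℕ} {A : List ℝ → ℝ → ℝ}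
    (hA : IsOnline S c A) : IsOnline S c (algR S c A) :=
  fun σ hσ i hi => (main_step hA σ hσ i hi (Inv_all hA σ hσ i (le_of_lt hi))).2.1

theorem algR_surr {S : Finset ℝ} {c : ℝ → ℕ} {A : List ℝ → ℝ → ℝ}
    (hA : IsOnline S c A) : OSurrOriented S c (algR S c A) :=
  fun σ hσ i hi => (main_step hA σ hσ i hi (Inv_all hA σ hσ i (le_of_lt hi))).2.2

theorem algR_cost {S : Finset ℝ} {c : ℝ → ℕ} {A : List ℝ → ℝ → ℝ}
    (hA : IsOnline S c A) (σ : List ℝ) (hσ : ValidSeq S c σ) :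
    ocost (algR S c A) σ ≤ ocost A σ := by
  have h := (Inv_all hA σ hσ σ.length le_rfl).cost
  have h2 := pairCost_nonneg (simSt S c A (σ.take σ.length)).L
  rw [ocost, ocost]
  linarith


end StatementFiveAux

/-- For every deterministic online algorithm `A` for
`OFAL(S,c)` there is a surrounding-oriented deterministic online algorithm `A'`
whose cost never exceeds that of `A`. -/
theorem exists_surrounding_oriented
    (S : Finset ℝ) (hS : S.Nonempty)
    (c : ℝ → ℕ) (hc : ∀ s ∈ S, 1 ≤ c s)
    (A : List ℝ → ℝ → ℝ) (hA : IsOnline S c A) :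
    ∃ A' : List ℝ → ℝ → ℝ, IsOnline S c A' ∧ OSurrOriented S c A' ∧
      ∀ σ : List ℝ, ValidSeq S c σ → ocost A' σ ≤ ocost A σ :=
  ⟨algR S c A, algR_online hA, algR_surr hA, fun σ hσ => algR_cost hA σ hσ⟩

end OFAL
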